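/- Let A be a d×d real symmetric matrix, with d = m + n + k, and write each v ∈ ℝᵈ as v = v_m ⊕ v_n ⊕ v_k with v_i ∈ ℝⁱ. Suppose ⟨Av, v⟩ ≥ 2‖v_m‖·‖v_n‖ for all v ∈ ℝᵈ. Then there exists τ > 0 such that ⟨Av, v⟩ ≥ τ‖v_m‖² + (1/τ)‖v_n‖² for all v ∈ ℝᵈ. -/

import Mathlib

open Finset
noncomputable section

/-- The Euclidean norm of the block of coordinates `i` of `v` with `a ≤ i < b`. -/
def blockNorm {d : ℕ} (v : Fin d → ℝ) (a b : ℕ) : ℝ :=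
  Real.sqrt (∑ i ∈ Finset.univ.filter (fun i : Fin d => a ≤ (i : ℕ) ∧ (i : ℕ) < b), v i ^ 2)

namespace QFBBAux

variable {d : ℕ}

def ss (s : Finset (Fin d)) (v : Fin d → ℝ) : ℝ := ∑ i ∈ s, v i ^ 2

def cross (s : Finset (Fin d)) (x y : Fin d → ℝ) : ℝ := ∑ i ∈ s, x i * y i

def Qf (A : Matrix (Fin d) (Fin d) ℝ) (v : Fin d → ℝ) : ℝ := ∑ i, A.mulVec v i * v i

def Bf (A : Matrix (Fin d) (Fin d) ℝ) (x y : Fin d → ℝ) : ℝ := ∑ i, A.mulVec x i * y i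

def Ff (A : Matrix (Fin d) (Fin d) ℝ) (sm sn : Finset (Fin d)) (τ : ℝ) (v : Fin d → ℝ) : ℝ :=
  Qf A v - τ * ss sm v - τ⁻¹ * ss sn v

lemma ss_nonneg (s : Finset (Fin d)) (v : Fin d → ℝ) : 0 ≤ ss s v :=
  Finset.sum_nonneg fun _ _ => sq_nonneg _

lemma ss_le_univ (s : Finset (Fin d)) (v : Fin d → ℝ) : ss s v ≤ ss univ v :=
  Finset.sum_le_sum_of_subset_of_nonneg (Finset.subset_univ s) fun _ _ _ => sq_nonneg _

lemma ss_smul (s : Finset (Fin d)) (c : ℝ) (v : Fin d → ℝ) : ss s (c • v) = c ^ 2 * ss s v := by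
  simp only [ss, Pi.smul_apply, smul_eq_mul, mul_pow, Finset.mul_sum]

lemma ss_add (s : Finset (Fin d)) (x y : Fin d → ℝ) :
    ss s (x + y) = ss s x + 2 * cross s x y + ss s y := by
  simp only [ss, cross, Pi.add_apply, Finset.mul_sum, ← Finset.sum_add_distrib]
  exact Finset.sum_congr rfl fun i _ => by ring

lemma cross_smul_smul (s : Finset (Fin d)) (a b : ℝ) (x y : Fin d → ℝ) :
    cross s (a • x) (b • y) = a * b * cross s x y := by
  simp only [cross, Pi.smul_apply, smul_eq_mul, Finset.mul_sum]
  exact Finset.sum_congr rfl fun i _ => by ring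

lemma ss_eq_zero {v : Fin d → ℝ} (hv : ss univ v = 0) : v = 0 := by
  funext i
  have h1 := (Finset.sum_eq_zero_iff_of_nonneg (fun i _ => sq_nonneg (v i))).1 hv i (mem_univ i)
  exact pow_eq_zero_iff (two_ne_zero) |>.1 h1

lemma ss_zero (s : Finset (Fin d)) : ss s (0 : Fin d → ℝ) = 0 := by simp [ss]

lemma Qf_zero (A : Matrix (Fin d) (Fin d) ℝ) : Qf A 0 = 0 := by
  simp [Qf, Matrix.mulVec_zero]

lemma Bf_symm {A : Matrix (Fin d) (Fin d) ℝ} (hA : A.IsSymm) (x y : Fin d → ℝ) :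
    Bf A x y = Bf A y x := by
  simp only [Bf, Matrix.mulVec, dotProduct, Finset.sum_mul]
  rw [Finset.sum_comm]
  refine Finset.sum_congr rfl fun i _ => Finset.sum_congr rfl fun j _ => ?_
  rw [hA.apply i j]
  ring

lemma Qf_add {A : Matrix (Fin d) (Fin d) ℝ} (hA : A.IsSymm) (x y : Fin d → ℝ) :
    Qf A (x + y) = Qf A x + 2 * Bf A x y + Qf A y := by
  have h1 : Qf A (x + y) = Qf A x + Bf A x y + (Bf A y x + Qf A y) := by
    simp only [Qf, Bf, Matrix.mulVec_add, Pi.add_apply, ← Finset.sum_add_distrib]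
    exact Finset.sum_congr rfl fun i _ => by ring
  rw [h1, Bf_symm hA]; ring

lemma Qf_smul (A : Matrix (Fin d) (Fin d) ℝ) (c : ℝ) (v : Fin d → ℝ) :
    Qf A (c • v) = c ^ 2 * Qf A v := by
  simp only [Qf, Matrix.mulVec_smul, Pi.smul_apply, smul_eq_mul, Finset.mul_sum]
  exact Finset.sum_congr rfl fun i _ => by ring

lemma Bf_smul_left (A : Matrix (Fin d) (Fin d) ℝ) (c : ℝ) (x y : Fin d → ℝ) :
    Bf A (c • x) y = c * Bf A x y := by
  simp only [Bf, Matrix.mulVec_smul, Pi.smul_apply, smul_eq_mul, Finset.mul_sum]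
  exact Finset.sum_congr rfl fun i _ => by ring

lemma Bf_smul_right (A : Matrix (Fin d) (Fin d) ℝ) (c : ℝ) (x y : Fin d → ℝ) :
    Bf A x (c • y) = c * Bf A x y := by
  simp only [Bf, Pi.smul_apply, smul_eq_mul, Finset.mul_sum]
  exact Finset.sum_congr rfl fun i _ => by ring

lemma Ff_smul (A : Matrix (Fin d) (Fin d) ℝ) (sm sn : Finset (Fin d)) (τ c : ℝ)
    (v : Fin d → ℝ) : Ff A sm sn τ (c • v) = c ^ 2 * Ff A sm sn τ v := by
  simp only [Ff, Qf_smul, ss_smul]; ring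

lemma continuous_ss (s : Finset (Fin d)) : Continuous (ss (d := d) s) := by
  unfold ss
  exact continuous_finset_sum _ fun i _ => (continuous_apply i).pow 2

lemma continuous_Qf (A : Matrix (Fin d) (Fin d) ℝ) : Continuous (Qf A) := by
  unfold Qf Matrix.mulVec dotProduct
  exact continuous_finset_sum _ fun i _ =>
    (continuous_finset_sum _ fun j _ => continuous_const.mul (continuous_apply j)).mul
      (continuous_apply i)

lemma continuous_Ff (A : Matrix (Fin d) (Fin d) ℝ) (sm sn : Finset (Fin d)) (τ : ℝ) :
    Continuous (Ff A sm sn τ) := by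
  unfold Ff
  exact ((continuous_Qf A).sub (continuous_const.mul (continuous_ss sm))).sub
    (continuous_const.mul (continuous_ss sn))

def Sph (d : ℕ) : Set (Fin d → ℝ) := {v | ss univ v = 1}

lemma mem_Sph {v : Fin d → ℝ} : v ∈ Sph d ↔ ss univ v = 1 := Iff.rfl

lemma isCompact_Sph : IsCompact (Sph d) := by
  have hclosed : IsClosed (Sph d) :=
    (isClosed_singleton (x := (1:ℝ))).preimage (continuous_ss univ)
  have hsub : Sph d ⊆ Set.pi Set.univ (fun _ : Fin d => Set.Icc (-1:ℝ) 1) := by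
    intro v hv i _
    have h1 : v i ^ 2 ≤ 1 := by
      have h2 : v i ^ 2 ≤ ss univ v :=
        Finset.single_le_sum (fun j _ => sq_nonneg (v j)) (mem_univ i)
      rw [mem_Sph.1 hv] at h2; exact h2
    constructor <;> nlinarith
  exact (isCompact_univ_pi fun _ => isCompact_Icc).of_isClosed_subset hclosed hsub

lemma exists_min (f : (Fin d → ℝ) → ℝ) (hf : Continuous f) (w0 : Fin d → ℝ)
    (hw0 : w0 ∈ Sph d) : ∃ v ∈ Sph d, ∀ w ∈ Sph d, f v ≤ f w := by
  obtain ⟨v, hv, hmin⟩ := isCompact_Sph.exists_isMinOn ⟨w0, hw0⟩ hf.continuousOn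
  exact ⟨v, hv, fun w hw => hmin hw⟩

lemma unit_mem_Sph (j : Fin d) : (fun i => if i = j then (1:ℝ) else 0) ∈ Sph d := by
  rw [mem_Sph]
  unfold ss
  rw [show (∑ i : Fin d, (if i = j then (1:ℝ) else 0) ^ 2)
      = ∑ i : Fin d, (if i = j then (1:ℝ) else 0) from
    Finset.sum_congr rfl fun i _ => by split <;> norm_num]
  simp

lemma ss_unit (s : Finset (Fin d)) (j : Fin d) :
    ss s (fun i => if i = j then (1:ℝ) else 0) = if j ∈ s then 1 else 0 := by
  unfold ss
  rw [show (∑ i ∈ s, (if i = j then (1:ℝ) else 0) ^ 2)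
      = ∑ i ∈ s, (if i = j then (1:ℝ) else 0) from
    Finset.sum_congr rfl fun i _ => by split <;> norm_num]
  exact Finset.sum_ite_eq' s j fun _ => 1

lemma isOpen_U (A : Matrix (Fin d) (Fin d) ℝ) (sm sn : Finset (Fin d)) (j0 : Fin d)
    (s : ℝ) (hs : s = 1 ∨ s = -1) :
    IsOpen {τ : ℝ | 0 < τ ∧ ∀ v ∈ Sph d,
      (∀ w ∈ Sph d, Ff A sm sn τ v ≤ Ff A sm sn τ w) →
      0 < s * (τ ^ 2 * ss sm v - ss sn v)} := by
  rw [Metric.isOpen_iff]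
  rintro τ ⟨hτ, hU⟩
  obtain ⟨v0, hv0S, hv0min⟩ := exists_min (Ff A sm sn τ) (continuous_Ff A sm sn τ)
    _ (unit_mem_Sph j0)
  set lam := Ff A sm sn τ v0 with hlam
  set hfun : (Fin d → ℝ) → ℝ :=
    fun v => max (Ff A sm sn τ v - lam) (s * (τ ^ 2 * ss sm v - ss sn v)) with hhfun
  have hcont : Continuous hfun := by
    apply Continuous.max
    · exact (continuous_Ff A sm sn τ).sub continuous_const
    · exact continuous_const.mul ((continuous_const.mul (continuous_ss sm)).sub
        (continuous_ss sn))
  obtain ⟨vm, hvmS, hvmmin⟩ := exists_min hfun hcont _ (unit_mem_Sph j0)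
  set δ := hfun vm / 2 with hδdef
  have hδ : 0 < δ := by
    have hpos : 0 < hfun vm := by
      by_cases hmin : ∀ w ∈ Sph d, Ff A sm sn τ vm ≤ Ff A sm sn τ w
      · exact lt_of_lt_of_le (hU vm hvmS hmin) (le_max_right _ _)
      · push_neg at hmin
        obtain ⟨w, hwS, hw⟩ := hmin
        have h1 : lam ≤ Ff A sm sn τ w := hv0min w hwS
        exact lt_of_lt_of_le (by linarith : (0:ℝ) < Ff A sm sn τ vm - lam) (le_max_left _ _)
    rw [hδdef]; linarith
  have hhge : ∀ v ∈ Sph d, 2 * δ ≤ hfun v := by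
    intro v hv
    have := hvmmin v hv
    rw [hδdef]; linarith
  have hden : (0:ℝ) < 1 + 2 / τ ^ 2 + 3 * τ := by positivity
  set r := min (τ / 2) (δ / (1 + 2 / τ ^ 2 + 3 * τ)) with hrdef
  have hr : 0 < r := lt_min (by positivity) (by positivity)
  have hr1 : r ≤ τ / 2 := min_le_left _ _
  have hr2 : r * (1 + 2 / τ ^ 2 + 3 * τ) ≤ δ := by
    have := min_le_right (τ / 2) (δ / (1 + 2 / τ ^ 2 + 3 * τ))
    calc r * (1 + 2 / τ ^ 2 + 3 * τ)
        ≤ (δ / (1 + 2 / τ ^ 2 + 3 * τ)) * (1 + 2 / τ ^ 2 + 3 * τ) := by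
          apply mul_le_mul_of_nonneg_right _ hden.le
          rw [hrdef]; exact min_le_right _ _
      _ = δ := by field_simp
  refine ⟨r, hr, ?_⟩
  intro τ' hτ'ball
  rw [Metric.mem_ball, Real.dist_eq] at hτ'ball
  have habs := abs_lt.1 hτ'ball
  have hτ'pos : 0 < τ' := by
    rcases habs with ⟨h1, _⟩; linarith [hr1, hτ]
  have hττ' : τ ^ 2 / 2 ≤ τ * τ' := by nlinarith [habs.1, hr1]
  refine ⟨hτ'pos, ?_⟩
  intro v' hv'S hv'min
  -- uniform perturbation bound on the sphere
  have hbd : ∀ w ∈ Sph d, |Ff A sm sn τ w - Ff A sm sn τ' w| ≤ |τ' - τ| * (1 + 2 / τ ^ 2) := by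
    intro w hwS
    have ha2 : 0 ≤ ss sm w := ss_nonneg _ _
    have hb2 : 0 ≤ ss sn w := ss_nonneg _ _
    have ha2' : ss sm w ≤ 1 := by
      have := ss_le_univ sm w; rw [mem_Sph.1 hwS] at this; exact this
    have hb2' : ss sn w ≤ 1 := by
      have := ss_le_univ sn w; rw [mem_Sph.1 hwS] at this; exact this
    have key : Ff A sm sn τ w - Ff A sm sn τ' w
        = (τ' - τ) * ss sm w + ((τ - τ') / (τ * τ')) * ss sn w := by
      unfold Ff
      field_simp
      ring
    rw [key]
    have hττ'pos : 0 < τ * τ' := mul_pos hτ hτ'pos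
    calc |(τ' - τ) * ss sm w + ((τ - τ') / (τ * τ')) * ss sn w|
        ≤ |(τ' - τ) * ss sm w| + |((τ - τ') / (τ * τ')) * ss sn w| := abs_add_le _ _
      _ = |τ' - τ| * ss sm w + (|τ' - τ| / (τ * τ')) * ss sn w := by
          rw [abs_mul, abs_mul, abs_div, abs_of_nonneg ha2, abs_of_nonneg hb2,
            abs_of_pos hττ'pos, abs_sub_comm τ τ']
      _ ≤ |τ' - τ| * 1 + (|τ' - τ| * (2 / τ ^ 2)) * 1 := by
          apply add_le_add
          · exact mul_le_mul_of_nonneg_left ha2' (abs_nonneg _)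
          · apply mul_le_mul _ hb2' hb2 (by positivity)
            rw [div_le_iff₀ hττ'pos]
            have e : |τ' - τ| * (2 / τ ^ 2) * (τ ^ 2 / 2) = |τ' - τ| := by
              field_simp
            have e2 : |τ' - τ| * (2 / τ ^ 2) * (τ ^ 2 / 2)
                ≤ |τ' - τ| * (2 / τ ^ 2) * (τ * τ') :=
              mul_le_mul_of_nonneg_left hττ' (by positivity)
            linarith
      _ = |τ' - τ| * (1 + 2 / τ ^ 2) := by ring
  -- the τ'-minimizer v' is almost a τ-minimizer
  have hb1 : Ff A sm sn τ v' ≤ lam + 2 * (|τ' - τ| * (1 + 2 / τ ^ 2)) := by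
    have e1 := abs_le.1 (hbd v' hv'S)
    have e2 := abs_le.1 (hbd v0 hv0S)
    have e3 : Ff A sm sn τ' v' ≤ Ff A sm sn τ' v0 := hv'min v0 hv0S
    rw [hlam]
    linarith [e1.1, e1.2, e2.1, e2.2]
  have hsmall : |τ' - τ| * (1 + 2 / τ ^ 2) < δ := by
    have h1 : |τ' - τ| * (1 + 2 / τ ^ 2) < r * (1 + 2 / τ ^ 2) := by
      apply mul_lt_mul_of_pos_right hτ'ball (by positivity)
    have h2 : r * (1 + 2 / τ ^ 2) < r * (1 + 2 / τ ^ 2 + 3 * τ) := by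
      apply mul_lt_mul_of_pos_left _ hr
      nlinarith
    linarith
  have hforce : 2 * δ ≤ s * (τ ^ 2 * ss sm v' - ss sn v') := by
    have h1 := hhge v' hv'S
    rw [hhfun] at h1
    rcases le_max_iff.1 h1 with h2 | h2
    · exfalso; linarith
    · exact h2
  -- conclude
  have hsq : |τ' ^ 2 - τ ^ 2| ≤ |τ' - τ| * (3 * τ) := by
    have e : τ' ^ 2 - τ ^ 2 = (τ' - τ) * (τ' + τ) := by ring
    rw [e, abs_mul]
    apply mul_le_mul_of_nonneg_left _ (abs_nonneg _)
    rw [abs_of_pos (by linarith : (0:ℝ) < τ' + τ)]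
    linarith [habs.2, hr1]
  have hlt : |τ' - τ| * (3 * τ) < δ := by
    have h1 : |τ' - τ| * (3 * τ) < r * (3 * τ) :=
      mul_lt_mul_of_pos_right hτ'ball (by positivity)
    have h2 : r * (3 * τ) < r * (1 + 2 / τ ^ 2 + 3 * τ) := by
      apply mul_lt_mul_of_pos_left _ hr
      have : (0:ℝ) < 2 / τ ^ 2 := by positivity
      linarith
    linarith
  have ha2v' : 0 ≤ ss sm v' := ss_nonneg _ _
  have ha2v'' : ss sm v' ≤ 1 := by
    have := ss_le_univ sm v'; rw [mem_Sph.1 hv'S] at this; exact this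
  have habs2 := abs_le.1 hsq
  have hbn : 0 ≤ |τ' - τ| * (3 * τ) := by positivity
  rcases hs with rfl | rfl
  · rw [one_mul] at hforce ⊢
    have p1 : -(|τ' - τ| * (3 * τ)) * ss sm v' ≤ (τ' ^ 2 - τ ^ 2) * ss sm v' := by
      apply mul_le_mul_of_nonneg_right _ ha2v'
      linarith [habs2.1]
    have p2 : -(|τ' - τ| * (3 * τ)) * 1 ≤ -(|τ' - τ| * (3 * τ)) * ss sm v' := by
      apply mul_le_mul_of_nonpos_left ha2v''
      linarith
    have key : τ' ^ 2 * ss sm v' - ss sn v'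
        = (τ ^ 2 * ss sm v' - ss sn v') + (τ' ^ 2 - τ ^ 2) * ss sm v' := by ring
    rw [key]
    linarith
  · rw [neg_one_mul, neg_sub] at hforce ⊢
    have q1 : (τ' ^ 2 - τ ^ 2) * ss sm v' ≤ (|τ' - τ| * (3 * τ)) * ss sm v' :=
      mul_le_mul_of_nonneg_right habs2.2 ha2v'
    have q2 : (|τ' - τ| * (3 * τ)) * ss sm v' ≤ (|τ' - τ| * (3 * τ)) * 1 :=
      mul_le_mul_of_nonneg_left ha2v'' hbn
    have key : ss sn v' - τ' ^ 2 * ss sm v'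
        = (ss sn v' - τ ^ 2 * ss sm v') - (τ' ^ 2 - τ ^ 2) * ss sm v' := by ring
    rw [key]
    linarith
lemma cover (A : Matrix (Fin d) (Fin d) ℝ) (hA : A.IsSymm) (sm sn : Finset (Fin d))
    (j0 : Fin d)
    (heq : ∀ τ : ℝ, 0 < τ → ∀ v, ss sn v = τ ^ 2 * ss sm v → 0 ≤ Ff A sm sn τ v)
    (τ : ℝ) (hτ : 0 < τ) (vbad : Fin d → ℝ) (hvbadS : vbad ∈ Sph d)
    (hbad : Ff A sm sn τ vbad < 0) :
    (∀ v ∈ Sph d, (∀ w ∈ Sph d, Ff A sm sn τ v ≤ Ff A sm sn τ w) →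
        0 < (1:ℝ) * (τ ^ 2 * ss sm v - ss sn v)) ∨
    (∀ v ∈ Sph d, (∀ w ∈ Sph d, Ff A sm sn τ v ≤ Ff A sm sn τ w) →
        0 < (-1:ℝ) * (τ ^ 2 * ss sm v - ss sn v)) := by
  by_contra hc
  push_neg at hc
  obtain ⟨⟨v1, hv1S, hv1min, hv1⟩, ⟨v2, hv2S, hv2min, hv2⟩⟩ := hc
  replace hv1 : τ ^ 2 * ss sm v1 - ss sn v1 ≤ 0 := by nlinarith [hv1]
  replace hv2 : 0 ≤ τ ^ 2 * ss sm v2 - ss sn v2 := by nlinarith [hv2]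
  -- hv1 : τ^2 * ss sm v1 - ss sn v1 ≤ 0, hv2 : 0 ≤ τ^2 * ss sm v2 - ss sn v2
  obtain ⟨v0, hv0S, hv0min⟩ := exists_min (Ff A sm sn τ) (continuous_Ff A sm sn τ)
    _ (unit_mem_Sph j0)
  set lam := Ff A sm sn τ v0 with hlam
  have hlamneg : lam < 0 := lt_of_le_of_lt (hv0min vbad hvbadS) hbad
  have hFv1 : Ff A sm sn τ v1 = lam :=
    le_antisymm (hv1min v0 hv0S) (hv0min v1 hv1S)
  have hFv2 : Ff A sm sn τ v2 = lam :=
    le_antisymm (hv2min v0 hv0S) (hv0min v2 hv2S)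
  set G : (Fin d → ℝ) → ℝ := fun v => Ff A sm sn τ v - lam * ss univ v with hG
  set BB : (Fin d → ℝ) → (Fin d → ℝ) → ℝ := fun x y =>
    Bf A x y - τ * cross sm x y - τ⁻¹ * cross sn x y - lam * cross univ x y with hBB
  have Gexp : ∀ (a b : ℝ) (x y : Fin d → ℝ),
      G (a • x + b • y) = a ^ 2 * G x + 2 * (a * b) * BB x y + b ^ 2 * G y := by
    intro a b x y
    rw [hG, hBB]
    simp only [Ff, Qf_add hA, Qf_smul, Bf_smul_left, Bf_smul_right,
      ss_add, ss_smul, cross_smul_smul]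
    ring
  have Gsmul : ∀ (c : ℝ) (v : Fin d → ℝ), G (c • v) = c ^ 2 * G v := by
    intro c v
    show Ff A sm sn τ (c • v) - lam * ss univ (c • v)
        = c ^ 2 * (Ff A sm sn τ v - lam * ss univ v)
    rw [Ff_smul, ss_smul]; ring
  -- `G` is nonnegative everywhere
  have hGnn : ∀ v, 0 ≤ G v := by
    intro v
    by_cases hv : ss univ v = 0
    · have hv0 : v = 0 := ss_eq_zero hv
      rw [hv0, hG]
      simp [Ff, Qf_zero, ss_zero]
    · have hpos : 0 < ss univ v := (ss_nonneg _ _).lt_of_ne (Ne.symm hv)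
      set c := (Real.sqrt (ss univ v))⁻¹ with hc
      have hcpos : 0 < c := by
        rw [hc]; exact inv_pos.2 (Real.sqrt_pos.2 hpos)
      have hc2 : c ^ 2 = (ss univ v)⁻¹ := by
        rw [hc, inv_pow, Real.sq_sqrt hpos.le]
      have hcvS : c • v ∈ Sph d := by
        rw [mem_Sph, ss_smul, hc2, inv_mul_cancel₀ hv]
      have h1 : lam ≤ Ff A sm sn τ (c • v) := hv0min _ hcvS
      have h2 : G (c • v) = c ^ 2 * G v := Gsmul c v
      have h3 : 0 ≤ G (c • v) := by
        rw [hG]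
        simp only
        rw [mem_Sph.1 hcvS]
        linarith
      have hc2p : 0 < c ^ 2 := pow_pos hcpos 2
      nlinarith [h2, h3, hc2p]
  have hG1 : G v1 = 0 := by rw [hG]; simp only; rw [hFv1, mem_Sph.1 hv1S]; ring
  have hG2 : G v2 = 0 := by rw [hG]; simp only; rw [hFv2, mem_Sph.1 hv2S]; ring
  -- the bilinear cross term vanishes
  have hBB0 : BB v1 v2 = 0 := by
    have e1 := Gexp 1 1 v1 v2
    have e2 := Gexp 1 (-1) v1 v2
    rw [hG1, hG2] at e1 e2
    have p1 := hGnn ((1:ℝ) • v1 + (1:ℝ) • v2)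
    have p2 := hGnn ((1:ℝ) • v1 + (-1:ℝ) • v2)
    rw [e1] at p1
    rw [e2] at p2
    nlinarith
  have hcomb : ∀ t : ℝ, G ((1 - t) • v1 + t • v2) = 0 := by
    intro t
    rw [Gexp (1 - t) t v1 v2, hG1, hG2, hBB0]
    ring
  -- contradiction from any minimizer on the balance line
  have heqcase : ∀ w : Fin d → ℝ, ss univ w ≠ 0 → G w = 0 →
      ss sn w = τ ^ 2 * ss sm w → False := by
    intro w hw hGw hbal
    have hpos : 0 < ss univ w := (ss_nonneg _ _).lt_of_ne (Ne.symm hw)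
    set c := (Real.sqrt (ss univ w))⁻¹ with hc
    have hc2 : c ^ 2 = (ss univ w)⁻¹ := by
      rw [hc, inv_pow, Real.sq_sqrt hpos.le]
    have hc2pos : 0 < c ^ 2 := by rw [hc2]; exact inv_pos.2 hpos
    have hbal' : ss sn (c • w) = τ ^ 2 * ss sm (c • w) := by
      rw [ss_smul, ss_smul, hbal]; ring
    have h1 : 0 ≤ Ff A sm sn τ (c • w) := heq τ hτ _ hbal'
    have h2 : Ff A sm sn τ (c • w) = c ^ 2 * Ff A sm sn τ w := Ff_smul A sm sn τ c w
    have h3 : Ff A sm sn τ w = lam * ss univ w := by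
      have := hGw; rw [hG] at this; simp only at this; linarith
    have h4 : Ff A sm sn τ w < 0 := by
      rw [h3]; exact mul_neg_of_neg_of_pos hlamneg hpos
    nlinarith
  -- strict inequalities at v1 and v2
  have hv1' : τ ^ 2 * ss sm v1 < ss sn v1 := by
    rcases lt_or_eq_of_le hv1 with h' | h'
    · linarith
    · exfalso
      apply heqcase v1 (by rw [mem_Sph.1 hv1S]; norm_num) hG1
      linarith
  have hv2' : ss sn v2 < τ ^ 2 * ss sm v2 := by
    rcases lt_or_eq_of_le hv2 with h' | h'
    · linarith
    · exfalso
      apply heqcase v2 (by rw [mem_Sph.1 hv2S]; norm_num) hG2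
      linarith
  -- IVT
  set u : ℝ → (Fin d → ℝ) := fun t => (1 - t) • v1 + t • v2 with hu
  set φ : ℝ → ℝ := fun t => ss sn (u t) - τ ^ 2 * ss sm (u t) with hφ
  have hφc : ContinuousOn φ (Set.Icc 0 1) := by
    have hcu : Continuous u := by
      rw [hu]
      exact ((continuous_const.sub continuous_id).smul continuous_const).add
        (continuous_id.smul continuous_const)
    exact (((continuous_ss sn).comp hcu).sub
      (continuous_const.mul ((continuous_ss sm).comp hcu))).continuousOn
  have hu0 : u 0 = v1 := by rw [hu]; simp
  have hu1 : u 1 = v2 := by rw [hu]; simp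
  have hφ0 : 0 < φ 0 := by rw [hφ]; simp only; rw [hu0]; linarith
  have hφ1 : φ 1 < 0 := by rw [hφ]; simp only; rw [hu1]; linarith
  have hIVT : (0:ℝ) ∈ Set.Icc (φ 1) (φ 0) := ⟨hφ1.le, hφ0.le⟩
  obtain ⟨t, htI, htφ⟩ := intermediate_value_Icc' (by norm_num : (0:ℝ) ≤ 1) hφc hIVT
  -- the IVT point is nonzero
  have hune : ss univ (u t) ≠ 0 := by
    intro h0
    have hu0' : u t = 0 := ss_eq_zero h0
    have hkey : (1 - t) • v1 = (-t) • v2 := by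
      have : (1 - t) • v1 + t • v2 = 0 := hu0'
      funext i
      have := congrFun this i
      simp only [Pi.add_apply, Pi.smul_apply, smul_eq_mul, Pi.zero_apply] at this ⊢
      simp only [neg_mul]
      linarith
    have e1 : ss univ ((1 - t) • v1) = ss univ ((-t) • v2) := by rw [hkey]
    rw [ss_smul, ss_smul, mem_Sph.1 hv1S, mem_Sph.1 hv2S] at e1
    have ht2 : t = 1 / 2 := by nlinarith
    have e2 : ss sm ((1 - t) • v1) = ss sm ((-t) • v2) := by rw [hkey]
    have e3 : ss sn ((1 - t) • v1) = ss sn ((-t) • v2) := by rw [hkey]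
    rw [ss_smul, ss_smul] at e2 e3
    rw [ht2] at e2 e3
    norm_num at e2 e3
    -- ss sm v1 = ss sm v2, ss sn v1 = ss sn v2
    nlinarith [hv1', hv2']
  have hGu : G (u t) = 0 := hcomb t
  have hbal : ss sn (u t) = τ ^ 2 * ss sm (u t) := by
    have := htφ
    rw [hφ] at this
    simp only at this
    linarith
  exact heqcase (u t) hune hGu hbal

end QFBBAux

open QFBBAux in
/-- if a symmetric `d×d` matrix satisfies `⟨Av,v⟩ ≥ 2‖v_m‖‖v_n‖` for all `v`,
where `v = v_m ⊕ v_n ⊕ v_k`, then there is `τ > 0` with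
`⟨Av,v⟩ ≥ τ‖v_m‖² + τ⁻¹‖v_n‖²` for all `v`. -/
theorem quadratic_form_block_bound (m n k : ℕ) (hm : 1 ≤ m) (hn : 1 ≤ n)
    (A : Matrix (Fin (m + n + k)) (Fin (m + n + k)) ℝ) (hA : A.IsSymm)
    (h : ∀ v : Fin (m + n + k) → ℝ,
      2 * blockNorm v 0 m * blockNorm v m (m + n) ≤ ∑ i, A.mulVec v i * v i) :
    ∃ τ > (0 : ℝ), ∀ v : Fin (m + n + k) → ℝ,
      τ * blockNorm v 0 m ^ 2 + τ⁻¹ * blockNorm v m (m + n) ^ 2 ≤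
        ∑ i, A.mulVec v i * v i := by
  classical
  set sm : Finset (Fin (m + n + k)) :=
    Finset.univ.filter (fun i : Fin (m + n + k) => 0 ≤ (i : ℕ) ∧ (i : ℕ) < m) with hsm
  set sn : Finset (Fin (m + n + k)) :=
    Finset.univ.filter (fun i : Fin (m + n + k) => m ≤ (i : ℕ) ∧ (i : ℕ) < m + n) with hsn
  have hbn1 : ∀ v : Fin (m + n + k) → ℝ, blockNorm v 0 m ^ 2 = ss sm v := fun v =>
    Real.sq_sqrt (Finset.sum_nonneg fun i _ => sq_nonneg _)
  have hbn2 : ∀ v : Fin (m + n + k) → ℝ, blockNorm v m (m + n) ^ 2 = ss sn v := fun v =>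
    Real.sq_sqrt (Finset.sum_nonneg fun i _ => sq_nonneg _)
  have hbn1' : ∀ v : Fin (m + n + k) → ℝ, blockNorm v 0 m = Real.sqrt (ss sm v) :=
    fun v => rfl
  have hbn2' : ∀ v : Fin (m + n + k) → ℝ, blockNorm v m (m + n) = Real.sqrt (ss sn v) :=
    fun v => rfl
  have hQrfl : ∀ v : Fin (m + n + k) → ℝ, (∑ i, A.mulVec v i * v i) = Qf A v := fun _ => rfl
  have hQpos : ∀ v : Fin (m + n + k) → ℝ, 0 ≤ Qf A v := by
    intro v
    have h0 := h v
    rw [hbn1' v, hbn2' v, hQrfl v] at h0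
    have := Real.sqrt_nonneg (ss sm v)
    have := Real.sqrt_nonneg (ss sn v)
    nlinarith
  have heq : ∀ τ : ℝ, 0 < τ → ∀ v, ss sn v = τ ^ 2 * ss sm v → 0 ≤ Ff A sm sn τ v := by
    intro τ hτ v hbal
    have h0 := h v
    rw [hbn1' v, hbn2' v, hQrfl v] at h0
    have e3 : Real.sqrt (ss sn v) = τ * Real.sqrt (ss sm v) := by
      rw [hbal, Real.sqrt_mul (sq_nonneg τ), Real.sqrt_sq hτ.le]
    rw [e3] at h0
    have e4 : Real.sqrt (ss sm v) ^ 2 = ss sm v := Real.sq_sqrt (ss_nonneg _ _)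
    have h0' : 2 * τ * ss sm v ≤ Qf A v := by
      have e5 : 2 * Real.sqrt (ss sm v) * (τ * Real.sqrt (ss sm v))
          = 2 * τ * ss sm v := by
        rw [show 2 * Real.sqrt (ss sm v) * (τ * Real.sqrt (ss sm v))
            = 2 * τ * Real.sqrt (ss sm v) ^ 2 from by ring, e4]
      linarith
    unfold Ff
    rw [hbal]
    have e6 : τ⁻¹ * (τ ^ 2 * ss sm v) = τ * ss sm v := by
      field_simp
    rw [e6]
    linarith
  by_contra hcon
  push_neg at hcon
  have hbadS : ∀ τ : ℝ, 0 < τ → ∃ v ∈ Sph (m + n + k), Ff A sm sn τ v < 0 := by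
    intro τ hτ
    obtain ⟨v, hv⟩ := hcon τ hτ
    rw [hQrfl v, hbn1 v, hbn2 v] at hv
    have hFv : Ff A sm sn τ v < 0 := by unfold Ff; linarith
    have hvne : ss univ v ≠ 0 := by
      intro h0
      rw [ss_eq_zero h0] at hFv
      unfold Ff at hFv
      rw [Qf_zero, ss_zero, ss_zero] at hFv
      norm_num at hFv
    have hpos : 0 < ss univ v := (ss_nonneg _ _).lt_of_ne (Ne.symm hvne)
    set c := (Real.sqrt (ss univ v))⁻¹ with hc
    have hcpos : 0 < c := inv_pos.2 (Real.sqrt_pos.2 hpos)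
    have hc2 : c ^ 2 = (ss univ v)⁻¹ := by rw [hc, inv_pow, Real.sq_sqrt hpos.le]
    refine ⟨c • v, ?_, ?_⟩
    · rw [mem_Sph, ss_smul, hc2, inv_mul_cancel₀ hvne]
    · rw [Ff_smul]
      exact mul_neg_of_pos_of_neg (pow_pos hcpos 2) hFv
  -- distinguished coordinates
  have hd0 : 0 < m + n + k := by omega
  have hdm : m < m + n + k := by omega
  set j0 : Fin (m + n + k) := ⟨0, hd0⟩ with hj0
  set jn : Fin (m + n + k) := ⟨m, hdm⟩ with hjn
  set e0 : Fin (m + n + k) → ℝ := fun i => if i = j0 then 1 else 0 with he0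
  set e1 : Fin (m + n + k) → ℝ := fun i => if i = jn then 1 else 0 with he1
  have hj0sm : j0 ∈ sm := by
    rw [hsm, Finset.mem_filter]
    refine ⟨Finset.mem_univ _, ?_⟩
    simp only [hj0]
    omega
  have hj0sn : j0 ∉ sn := by
    rw [hsn, Finset.mem_filter]
    simp only [hj0, Finset.mem_univ, true_and, not_and, not_lt]
    omega
  have hjnsm : jn ∉ sm := by
    rw [hsm, Finset.mem_filter]
    simp only [hjn, Finset.mem_univ, true_and, not_and, not_lt]
    omega
  have hjnsn : jn ∈ sn := by
    rw [hsn, Finset.mem_filter]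
    refine ⟨Finset.mem_univ _, ?_⟩
    simp only [hjn]
    omega
  -- the two open sets
  set U : ℝ → Set ℝ := fun s => {τ : ℝ | 0 < τ ∧ ∀ v ∈ Sph (m + n + k),
    (∀ w ∈ Sph (m + n + k), Ff A sm sn τ v ≤ Ff A sm sn τ w) →
    0 < s * (τ ^ 2 * ss sm v - ss sn v)} with hUdef
  have hopen1 : IsOpen (U 1) := isOpen_U A sm sn j0 1 (Or.inl rfl)
  have hopen2 : IsOpen (U (-1)) := isOpen_U A sm sn j0 (-1) (Or.inr rfl)
  have hcover : Set.Ioi (0 : ℝ) ⊆ U 1 ∪ U (-1) := by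
    intro τ hτ
    obtain ⟨vbad, hvbadS, hbad⟩ := hbadS τ hτ
    rcases cover A hA sm sn j0 heq τ hτ vbad hvbadS hbad with hc | hc
    · exact Or.inl ⟨hτ, hc⟩
    · exact Or.inr ⟨hτ, hc⟩
  -- U 1 is nonempty (large τ)
  have hmem1 : (Qf A e0 + 3) ∈ U 1 := by
    have hQe0 := hQpos e0
    have hτp : (0:ℝ) < Qf A e0 + 3 := by linarith
    refine ⟨hτp, ?_⟩
    intro v hvS hvmin
    rw [one_mul]
    by_contra hle
    push_neg at hle
    set τ := Qf A e0 + 3 with hτdef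
    have hτ3 : (3:ℝ) ≤ τ := by rw [hτdef]; linarith
    have hvS' : ss univ v = 1 := mem_Sph.1 hvS
    have hb1 : ss sn v ≤ 1 := by
      have := ss_le_univ sn v; rw [hvS'] at this; exact this
    have h5 : τ ^ 2 * ss sm v ≤ 1 := by linarith
    have ha2nn := ss_nonneg sm v
    have hb2nn := ss_nonneg sn v
    have hτpos : (0:ℝ) < τ := hτp
    have hτinv : τ⁻¹ ≤ 3⁻¹ := by
      apply inv_anti₀ (by norm_num) hτ3
    have hτinvnn : (0:ℝ) ≤ τ⁻¹ := by positivity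
    have hlow : -(2 * τ⁻¹) ≤ Ff A sm sn τ v := by
      unfold Ff
      have e : τ * ss sm v = τ⁻¹ * (τ ^ 2 * ss sm v) := by
        field_simp
      have e1' : τ⁻¹ * (τ ^ 2 * ss sm v) ≤ τ⁻¹ * 1 :=
        mul_le_mul_of_nonneg_left h5 hτinvnn
      have e2' : τ⁻¹ * ss sn v ≤ τ⁻¹ * 1 :=
        mul_le_mul_of_nonneg_left hb1 hτinvnn
      have := hQpos v
      linarith [e.symm ▸ e1']
    have hFe0 : Ff A sm sn τ e0 = Qf A e0 - τ := by
      unfold Ff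
      rw [he0, ss_unit, ss_unit, if_pos hj0sm, if_neg hj0sn]
      ring
    have hmin := hvmin e0 (unit_mem_Sph j0)
    rw [hFe0] at hmin
    have : Qf A e0 - τ = -3 := by rw [hτdef]; ring
    linarith
  -- U (-1) is nonempty (small τ)
  have hmem2 : (Qf A e1 + 3)⁻¹ ∈ U (-1) := by
    have hQe1 := hQpos e1
    have hbase : (0:ℝ) < Qf A e1 + 3 := by linarith
    have hτp : (0:ℝ) < (Qf A e1 + 3)⁻¹ := by positivity
    refine ⟨hτp, ?_⟩
    intro v hvS hvmin
    by_contra hle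
    push_neg at hle
    have hle' : 0 ≤ ((Qf A e1 + 3)⁻¹) ^ 2 * ss sm v - ss sn v := by nlinarith [hle]
    set τ := (Qf A e1 + 3)⁻¹ with hτdef
    have hτ3 : τ ≤ 3⁻¹ := by
      rw [hτdef]
      apply inv_anti₀ (by norm_num) (by linarith)
    have hvS' : ss univ v = 1 := mem_Sph.1 hvS
    have ha1 : ss sm v ≤ 1 := by
      have := ss_le_univ sm v; rw [hvS'] at this; exact this
    have ha2nn := ss_nonneg sm v
    have hb2nn := ss_nonneg sn v
    have hτpos : (0:ℝ) < τ := hτp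
    have hlow : -(2 * τ) ≤ Ff A sm sn τ v := by
      unfold Ff
      have e : τ⁻¹ * ss sn v ≤ τ⁻¹ * (τ ^ 2 * ss sm v) := by
        apply mul_le_mul_of_nonneg_left _ (by positivity)
        linarith
      have e2' : τ⁻¹ * (τ ^ 2 * ss sm v) = τ * ss sm v := by
        field_simp
      have e3' : τ * ss sm v ≤ τ * 1 := mul_le_mul_of_nonneg_left ha1 hτpos.le
      have := hQpos v
      linarith [e2' ▸ e]
    have hFe1 : Ff A sm sn τ e1 = Qf A e1 - τ⁻¹ := by
      unfold Ff
      rw [he1, ss_unit, ss_unit, if_neg hjnsm, if_pos hjnsn]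
      ring
    have hτinv : τ⁻¹ = Qf A e1 + 3 := by rw [hτdef, inv_inv]
    have hmin := hvmin e1 (unit_mem_Sph jn)
    rw [hFe1, hτinv] at hmin
    linarith
  -- connectedness contradiction
  have hpc := isPreconnected_Ioi (a := (0:ℝ))
  obtain ⟨τ, hτIoi, hτ1, hτ2⟩ := hpc (U 1) (U (-1)) hopen1 hopen2 hcover
    ⟨Qf A e0 + 3, by
      constructor
      · exact Set.mem_Ioi.2 hmem1.1
      · exact hmem1⟩
    ⟨(Qf A e1 + 3)⁻¹, by
      constructor
      · exact Set.mem_Ioi.2 hmem2.1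
      · exact hmem2⟩
  obtain ⟨v0, hv0S, hv0min⟩ := exists_min (Ff A sm sn τ) (continuous_Ff A sm sn τ)
    _ (unit_mem_Sph j0)
  have h1 := hτ1.2 v0 hv0S hv0min
  have h2 := hτ2.2 v0 hv0S hv0min
  nlinarith [h1, h2]
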